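/- Every edge of G lies in exactly one of the 21 octahedral subgraphs [L]_j, so G is the edge-disjoint union of 21 induced copies of K_{2,2,2}. -/

import Mathlib

/-- Points of the Fano plane: we use `1,…,7` inside `Fin 8`. -/
abbrev FPt := Fin 8

/-- The seven lines of the Fano plane. -/
def fanoLines : Finset (Finset FPt) :=
  {{1,2,3},{1,4,5},{1,6,7},{2,4,6},{2,5,7},{3,4,7},{3,5,6}}

/-- The seven points of the Fano plane. -/
def fanoPoints : Finset FPt := {1,2,3,4,5,6,7}

/-- `(p, pairs)` is an ordered pencil if for each `i`, `insert p (pairs i)`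
is a Fano line, and the three (2-element) pairs are distinct. -/
def IsPencil (v : FPt × (Fin 3 → Finset FPt)) : Prop :=
  v.1 ∈ fanoPoints ∧
  (∀ i, (v.2 i).card = 2 ∧ v.1 ∉ v.2 i ∧ insert v.1 (v.2 i) ∈ fanoLines) ∧
  Function.Injective v.2

instance : DecidablePred IsPencil := fun v => by
  unfold IsPencil Function.Injective; infer_instance

/-- Ordered pencils of the Fano plane: the vertices of the graph `G`. -/
def Pencil := {v : FPt × (Fin 3 → Finset FPt) // IsPencil v}

instance : DecidableEq Pencil := by unfold Pencil; infer_instance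
instance : Fintype Pencil := by unfold Pencil; infer_instance

/-- Adjacency: different base points, and the pairs in each position meet
in exactly one point. -/
def pAdj (v w : Pencil) : Prop :=
  v.1.1 ≠ w.1.1 ∧ ∀ i, (v.1.2 i ∩ w.1.2 i).card = 1

instance : DecidableRel pAdj := fun v w => by unfold pAdj; infer_instance

/-- The graph `G` on the 42 ordered pencils of the Fano plane. -/
def G : SimpleGraph Pencil where
  Adj := pAdj
  symm := ⟨fun v w (h : pAdj v w) => ⟨h.1.symm, fun i => by rw [Finset.inter_comm]; exact h.2 i⟩⟩
  loopless := ⟨fun v (h : pAdj v v) => h.1 rfl⟩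

instance : DecidableRel G.Adj := fun v w => by
  change Decidable (pAdj v w); infer_instance

/-- The octahedron (copy of `K_{2,2,2}`) `[L]_j` associated to a Fano line `L`
and position `j`. -/
def octa (L : Finset FPt) (j : Fin 3) : Finset Pencil :=
  Finset.univ.filter (fun v => v.1.1 ∈ L ∧ v.1.2 j ⊆ L)

set_option maxRecDepth 10000

lemma fano_line_unique : ∀ L ∈ fanoLines, ∀ L' ∈ fanoLines, ∀ p q : FPt,
    p ≠ q → p ∈ L → q ∈ L → p ∈ L' → q ∈ L' → L = L' := by decide

lemma fano_card : ∀ L ∈ fanoLines, L.card = 3 := by decide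

lemma fano_cover : ∀ L₁ ∈ fanoLines, ∀ L₂ ∈ fanoLines, ∀ L₃ ∈ fanoLines,
    ∀ p : FPt, p ∈ L₁ → p ∈ L₂ → p ∈ L₃ → L₁ ≠ L₂ → L₁ ≠ L₃ → L₂ ≠ L₃ →
    ∀ q ∈ fanoPoints, q ≠ p → q ∈ L₁ ∨ q ∈ L₂ ∨ q ∈ L₃ := by decide

lemma pencil_line_inj (v : Pencil) {i j : Fin 3}
    (h : insert v.1.1 (v.1.2 i) = insert v.1.1 (v.1.2 j)) : i = j := by
  obtain ⟨hP, hL, hI⟩ := v.2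
  apply hI
  have hi := (hL i).2.1
  have hj := (hL j).2.1
  have := congrArg (Finset.erase · v.1.1) h
  simpa [Finset.erase_insert, hi, hj] using this

theorem edge_in_unique_octa :
    ∀ v w : Pencil, G.Adj v w →
      ∃! o : Finset FPt × Fin 3,
        o.1 ∈ fanoLines ∧ v ∈ octa o.1 o.2 ∧ w ∈ octa o.1 o.2 := by
  intro v w hadj
  obtain ⟨hpq, hmeet⟩ := hadj
  set p := v.1.1 with hp
  set q := w.1.1 with hq
  obtain ⟨hvP, hvL, hvI⟩ := v.2
  obtain ⟨hwP, hwL, hwI⟩ := w.2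
  -- the three lines of v are distinct
  have vline : ∀ i, insert p (v.1.2 i) ∈ fanoLines := fun i => (hvL i).2.2
  have wline : ∀ i, insert q (w.1.2 i) ∈ fanoLines := fun i => (hwL i).2.2
  have vdist : ∀ i j : Fin 3, i ≠ j → insert p (v.1.2 i) ≠ insert p (v.1.2 j) :=
    fun i j hij h => hij (pencil_line_inj v h)
  -- step 1: find i with q ∈ v.1.2 i
  have hcov := fano_cover _ (vline 0) _ (vline 1) _ (vline 2) p
    (Finset.mem_insert_self _ _) (Finset.mem_insert_self _ _) (Finset.mem_insert_self _ _)
    (vdist 0 1 (by decide)) (vdist 0 2 (by decide)) (vdist 1 2 (by decide))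
    q hwP (Ne.symm hpq)
  have hqv : ∃ i, q ∈ v.1.2 i := by
    rcases hcov with h | h | h <;>
    · rw [Finset.mem_insert] at h
      rcases h with h | h
      · exact absurd h.symm hpq
      · exact ⟨_, h⟩
  obtain ⟨i, hqi⟩ := hqv
  -- step 2: at position i, the lines agree
  obtain ⟨x, hx⟩ := Finset.card_eq_one.mp (hmeet i)
  have hxv : x ∈ v.1.2 i := (Finset.mem_inter.mp (hx ▸ Finset.mem_singleton_self x)).1
  have hxw : x ∈ w.1.2 i := (Finset.mem_inter.mp (hx ▸ Finset.mem_singleton_self x)).2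
  have hxq : x ≠ q := fun h => (hwL i).2.1 (show q ∈ w.1.2 i from h ▸ hxw)
  have hAB : insert p (v.1.2 i) = insert q (w.1.2 i) := by
    apply fano_line_unique _ (vline i) _ (wline i) x q hxq
    · exact Finset.mem_insert_of_mem hxv
    · exact Finset.mem_insert_of_mem hqi
    · exact Finset.mem_insert_of_mem hxw
    · exact Finset.mem_insert_self _ _
  refine ⟨(insert p (v.1.2 i), i), ⟨vline i, ?_, ?_⟩, ?_⟩
  · simp only [octa, Finset.mem_filter, Finset.mem_univ, true_and]
    exact ⟨Finset.mem_insert_self _ _, Finset.subset_insert _ _⟩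
  · simp only [octa, Finset.mem_filter, Finset.mem_univ, true_and]
    rw [hAB]
    exact ⟨Finset.mem_insert_self _ _, Finset.subset_insert _ _⟩
  · rintro ⟨L', j⟩ ⟨hL', hvmem, hwmem⟩
    simp only [octa, Finset.mem_filter, Finset.mem_univ, true_and] at hvmem hwmem
    obtain ⟨hpL', hvj⟩ := hvmem
    obtain ⟨hqL', hwj⟩ := hwmem
    -- L' = insert p (v.1.2 j)
    have hsub : insert p (v.1.2 j) ⊆ L' := Finset.insert_subset hpL' hvj
    have hcard : L'.card ≤ (insert p (v.1.2 j)).card := by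
      rw [fano_card _ hL', Finset.card_insert_of_notMem (hvL j).2.1, (hvL j).1]
    have hLj : insert p (v.1.2 j) = L' := Finset.eq_of_subset_of_card_le hsub hcard
    -- L' contains p and q, as does insert p (v.1.2 i), so they're equal
    have hLi : insert p (v.1.2 i) = L' :=
      fano_line_unique _ (vline i) _ hL' p q hpq
        (Finset.mem_insert_self _ _) (Finset.mem_insert_of_mem hqi) hpL' hqL'
    have hij : j = i := pencil_line_inj v (hLj.trans hLi.symm)
    rw [Prod.mk.injEq]
    exact ⟨hLi.symm, hij⟩
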